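/- For every nonnegative integer n and every real t with t ≥ n + sqrt(n), the function g_n(t) = t^n e^{-t}/n! satisfies g_n(t) ≤ exp(sqrt(n) - t/(1 + sqrt(n))) / sqrt(n+1). -/

import Mathlib

open Real

lemma sqrtpi_le_stirling (n : ℕ) : Real.sqrt π ≤ Stirling.stirlingSeq (n + 1) := by
  have h : Filter.Tendsto (Stirling.stirlingSeq ∘ Nat.succ) Filter.atTop (nhds (Real.sqrt π)) :=
    Stirling.tendsto_stirlingSeq_sqrt_pi.comp (Filter.tendsto_add_atTop_nat 1)
  exact Stirling.stirlingSeq'_antitone.le_of_tendsto h n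

lemma fact_bound (n : ℕ) (hn : 1 ≤ n) :
    Real.sqrt (n + 1) * n ^ n * Real.exp (-n) ≤ (n.factorial : ℝ) := by
  obtain ⟨m, rfl⟩ := Nat.exists_eq_add_of_le hn
  set k := 1 + m
  have hk : (0:ℝ) < k := by positivity
  have h1 : Real.sqrt π * (Real.sqrt (2 * k) * ((k : ℝ) / Real.exp 1) ^ k) ≤ k.factorial := by
    have := sqrtpi_le_stirling m
    have hden : 0 < Real.sqrt (2 * k) * ((k : ℝ) / Real.exp 1) ^ k := by positivity
    rw [Stirling.stirlingSeq] at this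
    · calc Real.sqrt π * (Real.sqrt (2 * ↑k) * ((k:ℝ) / Real.exp 1) ^ k)
          ≤ ((k.factorial : ℝ) / (Real.sqrt (2 * k) * ((k:ℝ) / Real.exp 1) ^ k)) *
            (Real.sqrt (2 * k) * ((k:ℝ) / Real.exp 1) ^ k) := by
            apply mul_le_mul_of_nonneg_right _ hden.le
            convert this using 3
            · rfl
            all_goals simp [k, Nat.add_comm]
        _ = k.factorial := by field_simp
  have h2 : Real.sqrt (k + 1) ≤ Real.sqrt π * Real.sqrt (2 * k) := by
    rw [← Real.sqrt_mul pi_pos.le]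
    apply Real.sqrt_le_sqrt
    have hk1 : (1:ℝ) ≤ k := by exact_mod_cast hn
    nlinarith [pi_gt_three, hk1]
  calc Real.sqrt (k + 1) * k ^ k * Real.exp (-k)
      = Real.sqrt (k + 1) * ((k:ℝ) / Real.exp 1) ^ k := by
        rw [div_pow, Real.exp_neg, ← Real.exp_nat_mul, mul_one]
        ring
    _ ≤ (Real.sqrt π * Real.sqrt (2 * k)) * ((k:ℝ) / Real.exp 1) ^ k := by
        apply mul_le_mul_of_nonneg_right h2 (by positivity)
    _ ≤ k.factorial := by rw [mul_assoc]; exact h1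

theorem stmt_14 (n : ℕ) (t : ℝ) (ht : (n : ℝ) + Real.sqrt n ≤ t) :
    t ^ n * Real.exp (-t) / (Nat.factorial n : ℝ) ≤
      Real.exp (Real.sqrt n - t / (1 + Real.sqrt n)) / Real.sqrt (n + 1) := by
  rcases Nat.eq_zero_or_pos n with h0 | hn
  · subst h0
    simp
  · set s := Real.sqrt n with hs_def
    have hs2 : s ^ 2 = (n:ℝ) := Real.sq_sqrt (Nat.cast_nonneg n)
    have hs : 0 < s := Real.sqrt_pos.mpr (by exact_mod_cast hn)
    have hns : (0:ℝ) < (n:ℝ) + s := by positivity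
    have ht0 : 0 < t := lt_of_lt_of_le hns ht
    set u := t / ((n:ℝ) + s) with hu_def
    have hu1 : 1 ≤ u := (one_le_div hns).mpr ht
    have hA : u ^ n ≤ Real.exp ((n:ℝ) * u - n) := by
      calc u ^ n ≤ Real.exp (u - 1) ^ n := by
            apply pow_le_pow_left₀ (by linarith) _ n
            linarith [Real.add_one_le_exp (u - 1)]
        _ = Real.exp ((n:ℝ) * (u - 1)) := by rw [← Real.exp_nat_mul]
        _ = Real.exp ((n:ℝ) * u - n) := by ring_nf
    have hB : ((n:ℝ) + s) ^ n ≤ (n:ℝ) ^ n * Real.exp s := by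
      have h1 : (n:ℝ) + s = (n:ℝ) * (1 + 1/s) := by
        rw [← hs2]; field_simp
      have h2 : (1 + 1/s) ^ n ≤ Real.exp s := by
        calc (1 + 1/s) ^ n ≤ Real.exp (1/s) ^ n := by
              apply pow_le_pow_left₀ (by positivity) _ n
              linarith [Real.add_one_le_exp (1/s)]
          _ = Real.exp ((n:ℝ) * (1/s)) := by rw [← Real.exp_nat_mul]
          _ = Real.exp s := by rw [← hs2]; congr 1; field_simp
      calc ((n:ℝ)+s)^n = (n:ℝ)^n * (1+1/s)^n := by rw [h1, mul_pow]
        _ ≤ (n:ℝ)^n * Real.exp s := by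
            apply mul_le_mul_of_nonneg_left h2 (by positivity)
    have htn : t ^ n ≤ (n:ℝ)^n * Real.exp s * Real.exp ((n:ℝ)*u - n) := by
      have he : t ^ n = ((n:ℝ)+s)^n * u^n := by
        rw [hu_def, ← mul_pow]; congr 1; field_simp
      rw [he]
      calc ((n:ℝ)+s)^n * u^n ≤ ((n:ℝ)+s)^n * Real.exp ((n:ℝ)*u - n) :=
            mul_le_mul_of_nonneg_left hA (by positivity)
        _ ≤ (n:ℝ)^n * Real.exp s * Real.exp ((n:ℝ)*u - n) :=
            mul_le_mul_of_nonneg_right hB (by positivity)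
    have hfact := fact_bound n hn
    have hfs : (0:ℝ) < Real.sqrt (n+1) := by positivity
    have hfpos : (0:ℝ) < (n.factorial : ℝ) := by exact_mod_cast n.factorial_pos
    have h3 : (n:ℝ)*u - t = -(t/(1+s)) := by
      rw [hu_def, ← hs2]; field_simp; ring
    have e1 : (n:ℝ)^n * Real.exp s * Real.exp ((n:ℝ)*u-n) * Real.exp (-t)
        = (n:ℝ)^n * Real.exp (-(n:ℝ)) * Real.exp (s - t/(1+s)) := by
      calc (n:ℝ)^n * Real.exp s * Real.exp ((n:ℝ)*u-n) * Real.exp (-t)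
          = (n:ℝ)^n * (Real.exp s * Real.exp ((n:ℝ)*u-n) * Real.exp (-t)) := by ring
        _ = (n:ℝ)^n * Real.exp (s + ((n:ℝ)*u-n) + -t) := by
            rw [← Real.exp_add, ← Real.exp_add]
        _ = (n:ℝ)^n * (Real.exp (-(n:ℝ)) * Real.exp (s - t/(1+s))) := by
            rw [← Real.exp_add]; congr 1; exact congrArg Real.exp (by linarith)
        _ = (n:ℝ)^n * Real.exp (-(n:ℝ)) * Real.exp (s - t/(1+s)) := by ring
    calc t ^ n * Real.exp (-t) / (n.factorial : ℝ)
        ≤ ((n:ℝ)^n * Real.exp s * Real.exp ((n:ℝ)*u - n)) * Real.exp (-t) / (n.factorial : ℝ) := by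
          gcongr
      _ = ((n:ℝ)^n * Real.exp (-(n:ℝ)) / (n.factorial : ℝ)) * Real.exp (s - t/(1+s)) := by
          rw [e1]; ring
      _ ≤ (1 / Real.sqrt (n+1)) * Real.exp (s - t/(1+s)) := by
          apply mul_le_mul_of_nonneg_right _ (Real.exp_nonneg _)
          rw [div_le_div_iff₀ hfpos hfs]
          nlinarith [hfact]
      _ = Real.exp (s - t/(1+s)) / Real.sqrt (n+1) := by ring
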